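/- Let m > k > 0 be integers and let a be a real number with |a| < 1. Then for every real ξ with 0 < |ξ| < 1, the derivative with respect to ξ of the function ξ ↦ S(a,ξ)/ξ satisfies: 4·(1−ξ²)·d[S(a,ξ)/ξ]/dξ = (1−a²)^{m+1}·F(ξ), where F(ξ) = 4·(1−a²)^{−m−1}·[(ma+k)·a·ξ^{−2} − (ka+m)]·(1−ξ²)^m. -/

import Mathlib

/-- The polynomial S(a,ξ) = Σ_{j=0}^m [(−1)^j ξ^{2j}/(2j−1)]·
[C(m−1,j)(ma+k)a + C(m−1,j−1)(ka+m)], with C(m−1,j) = 0 for j < 0 or j ≥ m. -/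
noncomputable def Spoly (m k : ℕ) (a ξ : ℝ) : ℝ :=
  ∑ j ∈ Finset.range (m + 1),
    ((-1 : ℝ) ^ j * ξ ^ (2 * j) / (2 * (j : ℝ) - 1)) *
      ((Nat.choose (m - 1) j : ℝ) * ((m : ℝ) * a + (k : ℝ)) * a
        + (if j = 0 then 0 else (Nat.choose (m - 1) (j - 1) : ℝ))
            * ((k : ℝ) * a + (m : ℝ)))

/-- F(ξ) = 4·(1−a²)^{−m−1}·[(ma+k)·a·ξ^{−2} − (ka+m)]·(1−ξ²)^m. -/
noncomputable def Frat (m k : ℕ) (a ξ : ℝ) : ℝ :=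
  4 * ((1 - a ^ 2) ^ (m + 1))⁻¹
    * (((m : ℝ) * a + (k : ℝ)) * a * (ξ ^ 2)⁻¹ - ((k : ℝ) * a + (m : ℝ)))
    * (1 - ξ ^ 2) ^ m

lemma sum_choose_pow (n : ℕ) (x : ℝ) :
    ∑ j ∈ Finset.range (n + 1), (Nat.choose n j : ℝ) * x ^ j = (x + 1) ^ n := by
  rw [add_pow]
  exact Finset.sum_congr rfl (fun j hj => by ring)


/-- 4·(1−ξ²)·d[S(a,ξ)/ξ]/dξ = (1−a²)^{m+1}·F(ξ) for 0 < |ξ| < 1. -/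
theorem stmt_13 (m k : ℕ) (hk : 0 < k) (hkm : k < m) (a : ℝ) (ha : |a| < 1) :
    ∀ ξ : ℝ, 0 < |ξ| → |ξ| < 1 →
      4 * (1 - ξ ^ 2) * deriv (fun u => Spoly m k a u / u) ξ
        = (1 - a ^ 2) ^ (m + 1) * Frat m k a ξ := by
  obtain ⟨n, rfl⟩ : ∃ n, m = n + 1 := ⟨m - 1, by omega⟩
  intro ξ hξ0 hξ1
  have hξ : ξ ≠ 0 := by simpa [abs_pos] using hξ0
  set A : ℕ → ℝ := fun j => (Nat.choose n j : ℝ) * ((n+1 : ℕ) * a + (k : ℝ)) * a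
      + (if j = 0 then 0 else (Nat.choose n (j - 1) : ℝ)) * ((k : ℝ) * a + ((n+1 : ℕ) : ℝ)) with hA
  -- derivative computation
  have key : HasDerivAt (fun u => Spoly (n+1) k a u / u)
      ((∑ j ∈ Finset.range (n + 2), (-1 : ℝ) ^ j * A j * ξ ^ (2 * j)) / ξ ^ 2) ξ := by
    have heq : (fun u => Spoly (n+1) k a u / u)
        = fun u => ∑ j ∈ Finset.range (n + 2),
            ((-1 : ℝ) ^ j / (2 * (j : ℝ) - 1) * A j) * (u ^ (2 * j) * u⁻¹) := by
      funext u
      simp only [Spoly, Finset.sum_div, hA]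
      refine Finset.sum_congr rfl (fun j _ => ?_)
      push_cast
      ring
    rw [heq]
    have H : HasDerivAt (fun u : ℝ => ∑ j ∈ Finset.range (n + 2),
        ((-1 : ℝ) ^ j / (2 * (j : ℝ) - 1) * A j) * (u ^ (2 * j) * u⁻¹))
        (∑ j ∈ Finset.range (n + 2), ((-1 : ℝ) ^ j / (2 * (j : ℝ) - 1) * A j) *
          ((↑(2 * j) * ξ ^ (2 * j - 1)) * ξ⁻¹ + ξ ^ (2 * j) * (-(ξ ^ 2)⁻¹))) ξ := by
      apply HasDerivAt.fun_sum
      intro j _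
      exact ((hasDerivAt_pow (2 * j) ξ).mul (hasDerivAt_inv hξ)).const_mul _
    convert H using 1
    rw [Finset.sum_div]
    refine Finset.sum_congr rfl (fun j _ => ?_)
    rcases j with _ | i
    · simp
      field_simp
    · have h2 : (2 * ((i : ℝ) + 1) - 1) ≠ 0 := by
        have : (0:ℝ) ≤ (i:ℝ) := Nat.cast_nonneg i
        intro h; linarith
      have hp : 2 * (i + 1) = (2 * i + 1) + 1 := by ring
      push_cast [hp]
      rw [pow_succ]
      field_simp
      ring
  rw [key.deriv]
  -- sum identity
  have hsum : ∑ j ∈ Finset.range (n + 2), (-1 : ℝ) ^ j * A j * ξ ^ (2 * j)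
      = ((((n:ℝ)+1) * a + k) * a - ξ ^ 2 * ((k:ℝ) * a + ((n:ℝ)+1))) * (1 - ξ ^ 2) ^ n := by
    have hterm : ∀ j, (-1 : ℝ) ^ j * A j * ξ ^ (2 * j)
        = (Nat.choose n j : ℝ) * (-ξ^2) ^ j * ((((n:ℝ)+1) * a + k) * a)
          + ((if j = 0 then 0 else (Nat.choose n (j - 1) : ℝ)) * (-ξ^2) ^ j)
              * ((k:ℝ) * a + ((n:ℝ)+1)) := by
      intro j
      have hneg : ((-ξ^2 : ℝ)) ^ j = (-1)^j * ξ ^ (2*j) := by rw [neg_pow, pow_mul]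
      simp only [hA]
      rw [hneg]
      push_cast
      ring
    simp only [hterm, Finset.sum_add_distrib, ← Finset.sum_mul]
    have S1 : ∑ j ∈ Finset.range (n + 2), (Nat.choose n j : ℝ) * (-ξ^2) ^ j
        = (1 - ξ ^ 2) ^ n := by
      rw [Finset.sum_range_succ, Nat.choose_succ_self]
      simp [sum_choose_pow n (-ξ^2)]
      ring_nf
    have S2 : ∑ j ∈ Finset.range (n + 2),
        (if j = 0 then 0 else (Nat.choose n (j - 1) : ℝ)) * (-ξ^2) ^ j
        = -ξ^2 * (1 - ξ ^ 2) ^ n := by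
      rw [Finset.sum_range_succ']
      simp only [if_neg (Nat.succ_ne_zero _), Nat.add_sub_cancel, if_pos rfl, zero_mul, add_zero]
      have : ∀ i, (Nat.choose n i : ℝ) * (-ξ^2) ^ (i + 1)
          = (-ξ^2) * ((Nat.choose n i : ℝ) * (-ξ^2) ^ i) := by
        intro i; rw [pow_succ]; ring
      simp only [this, ← Finset.mul_sum, sum_choose_pow n (-ξ^2)]
      norm_num
      ring_nf
      tauto
    rw [S1, S2]
    ring
  rw [hsum, Frat]
  have h1a : (0:ℝ) < 1 - a ^ 2 := by nlinarith [sq_abs a, abs_nonneg a]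
  have ha2 : (1 - a ^ 2) ^ (n + 1 + 1) ≠ 0 := pow_ne_zero _ h1a.ne'
  have hξ2 : ξ ^ 2 ≠ 0 := pow_ne_zero _ hξ
  field_simp
  push_cast
  ring
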